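/- Let f be a transcendental entire function in the Eremenko–Lyubich class 𝓑. Then there exists λ > 0 such that the function g(z) = λ f(z) is of disjoint type; indeed λ can be chosen so that S(g) ∪ {0, g(0)} is contained in the open unit disc 𝔻 and g maps the closed unit disc into 𝔻. -/

import Mathlib

open Filter Topology Metric Set

/-- The chordal (spherical) distance on ℂ. -/
noncomputable def chordal (u v : ℂ) : ℝ :=
  ‖u - v‖ / Real.sqrt ((1 + ‖u‖ ^ 2) * (1 + ‖v‖ ^ 2))

/-- `f` is a transcendental entire function. -/
def IsTranscendentalEntire (f : ℂ → ℂ) : Prop :=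
  Differentiable ℂ f ∧ ¬ ∃ p : Polynomial ℂ, ∀ z, f z = p.eval z

/-- The set of critical values of `f`. -/
def criticalValues (f : ℂ → ℂ) : Set ℂ := {w | ∃ z, deriv f z = 0 ∧ f z = w}

/-- The set of finite asymptotic values of `f`. -/
def asymptoticValues (f : ℂ → ℂ) : Set ℂ :=
  {a | ∃ γ : ℝ → ℂ, ContinuousOn γ (Set.Ici 0) ∧
    Filter.Tendsto (fun t => ‖γ t‖) Filter.atTop Filter.atTop ∧
    Filter.Tendsto (fun t => f (γ t)) Filter.atTop (nhds a)}

/-- The set of singular values of `f`. -/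
def singularValues (f : ℂ → ℂ) : Set ℂ :=
  closure (criticalValues f ∪ asymptoticValues f)

/-- The postsingular set of `f`. -/
def postSingularSet (f : ℂ → ℂ) : Set ℂ :=
  closure (⋃ n : ℕ, f^[n] '' singularValues f)

/-- The Eremenko–Lyubich class `𝓑`. -/
def ClassB (f : ℂ → ℂ) : Prop := Bornology.IsBounded (singularValues f)

/-- The escaping set of `f`. -/
def escapingSet (f : ℂ → ℂ) : Set ℂ :=
  {z | Filter.Tendsto (fun n => ‖f^[n] z‖) Filter.atTop Filter.atTop}

/-- The Fatou set of `f`: points near which the family of iterates is uniformly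
equicontinuous (Euclidean metric on the domain, chordal metric on the codomain). -/
def fatouSet (f : ℂ → ℂ) : Set ℂ :=
  {z | ∃ δ > 0, ∀ ε > 0, ∃ η > 0, ∀ n : ℕ, ∀ u ∈ Metric.ball z δ, ∀ v ∈ Metric.ball z δ,
    dist u v < η → chordal (f^[n] u) (f^[n] v) < ε}

/-- The Julia set of `f`. -/
def juliaSet (f : ℂ → ℂ) : Set ℂ := (fatouSet f)ᶜ

/-- `f` is of disjoint type with associated domain `D`. -/
def IsDisjointTypeWith (f : ℂ → ℂ) (D : Set ℂ) : Prop :=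
  IsOpen D ∧ IsConnected D ∧ Bornology.IsBounded D ∧ SimplyConnectedSpace D ∧
    singularValues f ∪ {0, f 0} ⊆ D ∧ f '' closure D ⊆ D

/-- The Julia set of a disjoint type function with associated domain `D`. -/
def juliaSetDT (f : ℂ → ℂ) (D : Set ℂ) : Set ℂ := {z | ∀ n : ℕ, f^[n] z ∉ D}

/-- `f` has finite order. -/
def FiniteOrder (f : ℂ → ℂ) : Prop :=
  ∃ C > (0:ℝ), ∃ R > (0:ℝ), ∀ z : ℂ, R ≤ ‖z‖ →
    ‖f z‖ ≤ Real.exp (‖z‖ ^ C)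

/-- Every function in class `𝓑` has a disjoint type map in its parameter space: for some
`λ > 0`, the map `g = λf` is of disjoint type, with the open unit disc as the associated
domain. -/
theorem exists_disjoint_type_rescaling (f : ℂ → ℂ)
    (hf : IsTranscendentalEntire f) (hB : ClassB f) :
    ∃ lam > (0:ℝ), ∀ g : ℂ → ℂ, g = (fun z => (lam : ℂ) * f z) →
      IsDisjointTypeWith g (Metric.ball (0:ℂ) 1) ∧
      singularValues g ∪ {0, g 0} ⊆ Metric.ball (0:ℂ) 1 ∧
      g '' Metric.closedBall (0:ℂ) 1 ⊆ Metric.ball (0:ℂ) 1 := by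
  obtain ⟨R, hR⟩ := hB.subset_closedBall 0
  obtain ⟨M, hM⟩ := (isCompact_closedBall (0:ℂ) 1).exists_bound_of_continuousOn
    (hf.1.continuous.continuousOn (s := Metric.closedBall 0 1))
  set K : ℝ := max R M + 1 with hK
  have hRK : R ≤ K := le_trans (le_max_left _ _) (by linarith [le_refl (max R M)])
  have hMK : M ≤ K := le_trans (le_max_right _ _) (by linarith [le_refl (max R M)])
  have hM0 : 0 ≤ M := le_trans (norm_nonneg _) (hM 0 (by simp))
  have hK0 : (0:ℝ) < K := by
    have : (0:ℝ) ≤ max R M := le_trans hM0 (le_max_right _ _)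
    linarith
  set lam : ℝ := 1 / (2 * K) with hlam
  have hlam0 : 0 < lam := by positivity
  refine ⟨lam, hlam0, ?_⟩
  intro g hg
  have hlamne : (lam : ℂ) ≠ 0 := by
    simpa using (Complex.ofReal_ne_zero.mpr (ne_of_gt hlam0))
  -- bound on singular values of f (not just their closure)
  have hSf : criticalValues f ∪ asymptoticValues f ⊆ Metric.closedBall 0 R :=
    subset_trans subset_closure hR
  -- singular values of g are in closedBall 0 (lam * R)
  have hkey : singularValues g ⊆ Metric.closedBall (0:ℂ) (lam * R) := by
    apply closure_minimal _ Metric.isClosed_closedBall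
    rintro w (⟨z, hz1, hz2⟩ | ⟨γ, hγc, hγi, hγa⟩)
    · -- critical value
      have hd : deriv g z = (lam : ℂ) * deriv f z := by
        rw [hg]; exact deriv_const_mul _ (hf.1 z)
      rw [hd] at hz1
      have hdf : deriv f z = 0 := by
        rcases mul_eq_zero.mp hz1 with h | h
        · exact absurd h hlamne
        · exact h
      have hfz : f z ∈ Metric.closedBall (0:ℂ) R := hSf (Or.inl ⟨z, hdf, rfl⟩)
      rw [← hz2, hg]
      simp only [Metric.mem_closedBall, dist_zero_right] at hfz ⊢
      rw [norm_mul]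
      have hnl : ‖(lam:ℂ)‖ = lam := by simp [Complex.norm_real, abs_of_pos hlam0]
      rw [hnl]
      exact mul_le_mul_of_nonneg_left hfz hlam0.le
    · -- asymptotic value
      have hfa : Filter.Tendsto (fun t => f (γ t)) Filter.atTop (nhds (w / lam)) := by
        have := hγa.const_mul ((lam : ℂ)⁻¹)
        simp only [hg] at this
        have heq : (fun t => (lam:ℂ)⁻¹ * ((lam:ℂ) * f (γ t))) = fun t => f (γ t) := by
          funext t; rw [inv_mul_cancel_left₀ hlamne]
        rw [heq] at this
        simpa [div_eq_inv_mul] using this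
      have hmem : w / lam ∈ Metric.closedBall (0:ℂ) R :=
        hSf (Or.inr ⟨γ, hγc, hγi, hfa⟩)
      simp only [Metric.mem_closedBall, dist_zero_right] at hmem ⊢
      have : ‖w‖ = ‖(lam:ℂ)‖ * ‖w / lam‖ := by
        rw [← norm_mul, mul_div_cancel₀ _ hlamne]
      rw [this]
      have hnl : ‖(lam:ℂ)‖ = lam := by
        simp [Complex.norm_real, abs_of_pos hlam0]
      rw [hnl]
      exact mul_le_mul_of_nonneg_left hmem (le_of_lt hlam0)
  have hlamR : lam * R < 1 := by
    rw [hlam, div_mul_eq_mul_div, one_mul, div_lt_one (by positivity)]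
    calc R ≤ K := hRK
    _ < 2 * K := by linarith
  -- image of closed ball
  have himg : g '' Metric.closedBall (0:ℂ) 1 ⊆ Metric.ball (0:ℂ) 1 := by
    rintro _ ⟨z, hz, rfl⟩
    rw [hg]
    simp only [Metric.mem_ball, dist_zero_right, norm_mul]
    have h1 : ‖(lam:ℂ)‖ = lam := by simp [Complex.norm_real, abs_of_pos hlam0]
    have h2 : ‖f z‖ ≤ M := hM z hz
    calc ‖(lam:ℂ)‖ * ‖f z‖ ≤ lam * M := by
          rw [h1]; exact mul_le_mul_of_nonneg_left h2 (le_of_lt hlam0)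
      _ < 1 := by
          rw [hlam, div_mul_eq_mul_div, one_mul, div_lt_one (by positivity)]
          calc M ≤ K := hMK
          _ < 2 * K := by linarith
  have hsub : singularValues g ∪ {0, g 0} ⊆ Metric.ball (0:ℂ) 1 := by
    rintro w (hw | hw)
    · exact Metric.closedBall_subset_ball hlamR (hkey hw)
    · rcases hw with rfl | hw
      · simp
      · simp only [Set.mem_singleton_iff] at hw
        subst hw
        exact himg ⟨0, by simp, rfl⟩
  refine ⟨⟨Metric.isOpen_ball, ?_, Metric.isBounded_ball, ?_, hsub, ?_⟩, hsub, himg⟩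
  · exact (convex_ball (0:ℂ) 1).isConnected (Metric.nonempty_ball.mpr one_pos)
  · haveI : ContractibleSpace (Metric.ball (0:ℂ) 1) :=
      (convex_ball (0:ℂ) 1).contractibleSpace (Metric.nonempty_ball.mpr one_pos)
    infer_instance
  · exact subset_trans (Set.image_mono (subset_trans closure_ball_subset_closedBall
      (subset_refl _))) himg
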